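/- Let I be a nonempty set, (G,+,·) a skew left brace, and S = I×G×I the square skew left brace with operations (i,g,j)·(k,h,l) = (i, g·h, l), (i,g,j)* = (j, g⁻¹, i), (i,g,j)+(k,h,l) = (k, g+h, j), -(i,g,j) = (j, -g, i). For z = (u,t,v) ∈ S, one has z ∈ D_r(S) if and only if t ∈ D_r(G), where D_r(G) = {t ∈ G | (x+y)·t = x·t + (-(t)) + y·t for all x,y ∈ G}. -/
import Mathlib

theorem stmt7 {I G : Type*} [Nonempty I] [AddGroup G] [Group G]
    (hG : ∀ x y z : G, x * (y + z) = x * y + -x + x * z)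
    (u v : I) (t : G) :
    let S := I × G × I
    let mul : S → S → S := fun a b => (a.1, a.2.1 * b.2.1, b.2.2)
    let add : S → S → S := fun a b => (b.1, a.2.1 + b.2.1, a.2.2)
    let neg : S → S := fun a => (a.2.2, -a.2.1, a.1)
    let z : S := (u, t, v)
    (∀ a b : S, mul (add a b) z = add (add (mul a z) (neg z)) (mul b z)) ↔
      (∀ x y : G, (x + y) * t = x * t + -t + y * t) := by
  intro S mul add neg z
  constructor
  · intro h x y
    have := h (u, x, v) (u, y, v)
    rw [Prod.ext_iff, Prod.ext_iff] at this; exact this.2.1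
  · intro h a b
    simp [mul, add, neg, z, Prod.ext_iff, h a.2.1 b.2.1]
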